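/- The 'cut' comultiplication on the free Z-module with basis all compositions, defined by μ([a_1,...,a_m]) = Σ_{i=0}^{m} [a_1,...,a_i] ⊗ [a_{i+1},...,a_m], is coassociative and is an algebra homomorphism with respect to the overlapping shuffle product (i.e., μ(α * β) = μ(α) * μ(β) in the tensor-product algebra). -/

import Mathlib

/-- The overlapping shuffle product of two compositions, defined by the recursion
`[] * β = β`, `α * [] = α`,
`(a::α') * (b::β') = a::(α' * (b::β')) + b::((a::α') * β') + (a+b)::(α' * β')`. -/
noncomputable def osh : List ℕ+ → List ℕ+ → (List ℕ+ →₀ ℤ)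
  | [], β => Finsupp.single β 1
  | a :: α', [] => Finsupp.single (a :: α') 1
  | a :: α', b :: β' =>
      Finsupp.mapDomain (a :: ·) (osh α' (b :: β'))
        + Finsupp.mapDomain (b :: ·) (osh (a :: α') β')
        + Finsupp.mapDomain ((a + b) :: ·) (osh α' β')
  termination_by α β => α.length + β.length
  decreasing_by all_goals (simp [List.length_cons]; try omega)

/-- The `ℤ`-bilinear extension of the overlapping shuffle product. -/
noncomputable def oshMul (x y : List ℕ+ →₀ ℤ) : List ℕ+ →₀ ℤ :=
  x.sum fun α c => y.sum fun β d => (c * d) • osh α β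

open TensorProduct

/-- The 'cut' comultiplication on a basis composition:
`μ([a₁,…,a_m]) = ∑_{i=0}^{m} [a₁,…,a_i] ⊗ [a_{i+1},…,a_m]`. -/
noncomputable def cutB (α : List ℕ+) :
    (List ℕ+ →₀ ℤ) ⊗[ℤ] (List ℕ+ →₀ ℤ) :=
  ∑ i ∈ Finset.range (α.length + 1),
    Finsupp.single (α.take i) (1 : ℤ) ⊗ₜ[ℤ] Finsupp.single (α.drop i) (1 : ℤ)

/-- The `ℤ`-linear extension of the cut comultiplication. -/
noncomputable def cut : (List ℕ+ →₀ ℤ) →ₗ[ℤ] (List ℕ+ →₀ ℤ) ⊗[ℤ] (List ℕ+ →₀ ℤ) :=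
  Finsupp.lsum ℤ fun α => LinearMap.toSpanSingleton ℤ _ (cutB α)


set_option synthInstance.maxHeartbeats 1000000
set_option maxHeartbeats 1000000

lemma osh_nil_left (β : List ℕ+) : osh [] β = Finsupp.single β 1 := by simp [osh]

lemma osh_nil_right (α : List ℕ+) : osh α [] = Finsupp.single α 1 := by cases α <;> simp [osh]

lemma osh_cons_cons (a b : ℕ+) (α' β' : List ℕ+) :
    osh (a :: α') (b :: β') =
      Finsupp.mapDomain (a :: ·) (osh α' (b :: β'))
        + Finsupp.mapDomain (b :: ·) (osh (a :: α') β')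
        + Finsupp.mapDomain ((a + b) :: ·) (osh α' β') := by
  rw [osh]

lemma cut_single (α : List ℕ+) (c : ℤ) : cut (Finsupp.single α c) = c • cutB α := by
  simp [cut, LinearMap.toSpanSingleton_apply]

lemma cutB_cons (a : ℕ+) (α : List ℕ+) :
    cutB (a :: α) = Finsupp.single ([] : List ℕ+) (1:ℤ) ⊗ₜ[ℤ] Finsupp.single (a :: α) (1:ℤ)
      + ∑ i ∈ Finset.range (α.length + 1),
          Finsupp.single (a :: α.take i) (1:ℤ) ⊗ₜ[ℤ] Finsupp.single (α.drop i) (1:ℤ) := by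
  rw [cutB, List.length_cons, Finset.sum_range_succ']
  simp [add_comm]

lemma cut_mapDomain_cons (a : ℕ+) (x : List ℕ+ →₀ ℤ) :
    cut (Finsupp.mapDomain (a :: ·) x)
      = Finsupp.single ([] : List ℕ+) (1:ℤ) ⊗ₜ[ℤ] Finsupp.mapDomain (a :: ·) x
        + TensorProduct.map (Finsupp.lmapDomain ℤ ℤ (a :: ·)) LinearMap.id (cut x) := by
  induction x using Finsupp.induction_linear with
  | zero => simp
  | add f g hf hg =>
      simp only [Finsupp.mapDomain_add, map_add, hf, hg, TensorProduct.tmul_add]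
      abel
  | single γ c =>
      rw [Finsupp.mapDomain_single, cut_single, cut_single, cutB_cons, smul_add,
        TensorProduct.smul_tmul', map_smul]
      congr 1
      · rw [TensorProduct.smul_tmul]
        congr 1
        simp [Finsupp.smul_single]
      · congr 1
        rw [cutB, map_sum]
        refine Finset.sum_congr rfl fun i _ => ?_
        rw [TensorProduct.map_tmul]
        simp [Finsupp.lmapDomain_apply, Finsupp.mapDomain_single]

lemma assemble {M : Type*} [AddCommGroup M] (m n : ℕ) (T A B C : ℕ → ℕ → M) (t0 : M)
    (hT00 : t0 = T 0 0)
    (hTij : ∀ i j, T (i+1) (j+1) = A i (j+1) + B (i+1) j + C i j)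
    (hTi0 : ∀ i, T (i+1) 0 = A i 0)
    (hT0j : ∀ j, T 0 (j+1) = B 0 j) :
    t0 + (∑ i ∈ Finset.range (m+1), ∑ j ∈ Finset.range (n+1+1), A i j)
      + (∑ i ∈ Finset.range (m+1+1), ∑ j ∈ Finset.range (n+1), B i j)
      + (∑ i ∈ Finset.range (m+1), ∑ j ∈ Finset.range (n+1), C i j)
    = ∑ i ∈ Finset.range (m+1+1), ∑ j ∈ Finset.range (n+1+1), T i j := by
  simp only [Finset.sum_range_succ', Finset.sum_add_distrib, hT00, hTij, hTi0, hT0j]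
  abel

theorem cut_osh : ∀ (α β : List ℕ+),
    cut (osh α β) = ∑ i ∈ Finset.range (α.length + 1), ∑ j ∈ Finset.range (β.length + 1),
        osh (α.take i) (β.take j) ⊗ₜ[ℤ] osh (α.drop i) (β.drop j)
  | [], β => by
      rw [osh_nil_left, cut_single, one_smul, cutB]
      simp [osh_nil_left]
  | a :: α', [] => by
      rw [osh_nil_right, cut_single, one_smul, cutB]
      simp [osh_nil_right]
  | a :: α', b :: β' => by
      have ihA := cut_osh α' (b :: β')
      have ihB := cut_osh (a :: α') β'
      have ihC := cut_osh α' β'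
      rw [osh_cons_cons, map_add, map_add, cut_mapDomain_cons, cut_mapDomain_cons,
        cut_mapDomain_cons, ihA, ihB, ihC]
      simp only [map_sum, TensorProduct.map_tmul, Finsupp.lmapDomain_apply,
        LinearMap.id_coe, id_eq, List.length_cons]
      have key := assemble α'.length β'.length
        (fun i j => osh ((a :: α').take i) ((b :: β').take j) ⊗ₜ[ℤ]
          osh ((a :: α').drop i) ((b :: β').drop j))
        (fun i j => Finsupp.mapDomain (a :: ·) (osh (α'.take i) ((b :: β').take j)) ⊗ₜ[ℤ]
          osh (α'.drop i) ((b :: β').drop j))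
        (fun i j => Finsupp.mapDomain (b :: ·) (osh ((a :: α').take i) (β'.take j)) ⊗ₜ[ℤ]
          osh ((a :: α').drop i) (β'.drop j))
        (fun i j => Finsupp.mapDomain ((a + b) :: ·) (osh (α'.take i) (β'.take j)) ⊗ₜ[ℤ]
          osh (α'.drop i) (β'.drop j))
        ((Finsupp.single ([] : List ℕ+) (1:ℤ)) ⊗ₜ[ℤ] Finsupp.mapDomain (a :: ·) (osh α' (b :: β'))
          + (Finsupp.single ([] : List ℕ+) (1:ℤ)) ⊗ₜ[ℤ] Finsupp.mapDomain (b :: ·) (osh (a :: α') β')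
          + (Finsupp.single ([] : List ℕ+) (1:ℤ)) ⊗ₜ[ℤ] Finsupp.mapDomain ((a + b) :: ·) (osh α' β'))
        (by
          simp only [List.take_zero, List.drop_zero, osh_nil_left, osh_cons_cons,
            TensorProduct.tmul_add])
        (by
          intro i j
          simp only [List.take_succ_cons, List.drop_succ_cons, osh_cons_cons,
            TensorProduct.add_tmul])
        (by
          intro i
          simp only [List.take_succ_cons, List.drop_succ_cons, List.take_zero, List.drop_zero,
            osh_nil_right, osh_nil_left, Finsupp.mapDomain_single])
        (by
          intro j
          simp only [List.take_succ_cons, List.drop_succ_cons, List.take_zero, List.drop_zero,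
            osh_nil_right, osh_nil_left, Finsupp.mapDomain_single])
      rw [← key]
      abel
  termination_by α β => α.length + β.length

lemma tri {M : Type*} [AddCommMonoid M] (m : ℕ) (g : ℕ → ℕ → M) :
    ∑ i ∈ Finset.range (m+1), ∑ j ∈ Finset.range (i+1), g j (i - j)
      = ∑ j ∈ Finset.range (m+1), ∑ k ∈ Finset.range (m - j + 1), g j k := by
  rw [Finset.sum_sigma', Finset.sum_sigma']
  refine Finset.sum_nbij' (fun p => ⟨p.2, p.1 - p.2⟩) (fun p => ⟨p.1 + p.2, p.1⟩) ?_ ?_ ?_ ?_ ?_ <;>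
      rintro ⟨i, j⟩ h <;>
      simp only [Finset.mem_sigma, Finset.mem_range] at h ⊢
  · omega
  · omega
  · have : j + (i - j) = i := by omega
    rw [this]
  · have : i + j - i = j := by omega
    rw [this]

lemma coassoc_basis (α : List ℕ+) :
    (TensorProduct.assoc ℤ _ _ _) (TensorProduct.map cut LinearMap.id (cutB α))
      = TensorProduct.map LinearMap.id cut (cutB α) := by
  have hL : ∀ i ∈ Finset.range (α.length + 1),
      (TensorProduct.assoc ℤ (List ℕ+ →₀ ℤ) (List ℕ+ →₀ ℤ) (List ℕ+ →₀ ℤ))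
          (cutB (α.take i) ⊗ₜ[ℤ] Finsupp.single (α.drop i) (1:ℤ))
        = ∑ j ∈ Finset.range (i + 1),
            Finsupp.single (α.take j) (1:ℤ) ⊗ₜ[ℤ]
              (Finsupp.single ((α.drop j).take (i - j)) (1:ℤ) ⊗ₜ[ℤ]
                Finsupp.single ((α.drop j).drop (i - j)) (1:ℤ)) := by
    intro i hi
    rw [Finset.mem_range] at hi
    rw [cutB, TensorProduct.sum_tmul, map_sum, List.length_take,
      min_eq_left (by omega : i ≤ α.length)]
    refine Finset.sum_congr rfl fun j hj => ?_
    rw [Finset.mem_range] at hj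
    rw [TensorProduct.assoc_tmul, List.take_take, min_eq_left (by omega : j ≤ i),
      List.drop_take, List.drop_drop, (by omega : j + (i - j) = i)]
    rfl
  have hR : ∀ j ∈ Finset.range (α.length + 1),
      Finsupp.single (α.take j) (1:ℤ) ⊗ₜ[ℤ] cutB (α.drop j)
        = ∑ k ∈ Finset.range (α.length - j + 1),
            Finsupp.single (α.take j) (1:ℤ) ⊗ₜ[ℤ]
              (Finsupp.single ((α.drop j).take k) (1:ℤ) ⊗ₜ[ℤ]
                Finsupp.single ((α.drop j).drop k) (1:ℤ)) := by
    intro j _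
    rw [cutB, TensorProduct.tmul_sum, List.length_drop]
  conv_lhs => rw [cutB]
  conv_rhs => rw [cutB]
  simp only [map_sum, TensorProduct.map_tmul, LinearMap.id_coe, id_eq, cut_single, one_smul]
  erw [map_sum]
  erw [Finset.sum_congr rfl hL]
  rw [Finset.sum_congr rfl hR]
  exact tri α.length fun j k => Finsupp.single (α.take j) (1:ℤ) ⊗ₜ[ℤ]
    (Finsupp.single ((α.drop j).take k) (1:ℤ) ⊗ₜ[ℤ] Finsupp.single ((α.drop j).drop k) (1:ℤ))


/-- The cut comultiplication is coassociative, and it is an algebra homomorphism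
with respect to the overlapping shuffle product: on basis elements,
`μ(α * β) = μ(α) * μ(β)` in the tensor-product algebra, i.e.
`μ(α * β) = ∑_{i,j} (α_{≤i} * β_{≤j}) ⊗ (α_{>i} * β_{>j})`. -/
theorem cut_coassoc_and_mul :
    (∀ x : List ℕ+ →₀ ℤ,
      (TensorProduct.assoc ℤ _ _ _)
          ((TensorProduct.map cut LinearMap.id) (cut x))
        = (TensorProduct.map LinearMap.id cut) (cut x)) ∧
    (∀ α β : List ℕ+,
      cut (osh α β)
        = ∑ i ∈ Finset.range (α.length + 1), ∑ j ∈ Finset.range (β.length + 1),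
            osh (α.take i) (β.take j) ⊗ₜ[ℤ] osh (α.drop i) (β.drop j)) := by
  constructor
  · intro x
    induction x using Finsupp.induction_linear with
    | zero => simp; erw [map_zero]; rfl
    | add f g hf hg => simp only [map_add, hf, hg]; erw [map_add]; rw [hf, hg]; rfl
    | single α c =>
        simp only [cut_single, map_smul, LinearEquiv.map_smul, coassoc_basis]; erw [map_smul, LinearEquiv.map_smul, coassoc_basis, map_smul]; rfl
  · exact cut_osh
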